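/- Let q > 0 and let U be a uniform transform of (X−q)·γ(X) on (Ω, σ(X), ℙ), i.e. a σ(X)-measurable random variable uniformly distributed on [0,1] with F⁻¹_{(X−q)γ(X)}(U) = (X−q)·γ(X) almost surely. Then the event A* := {U > p} maximizes 𝔼[γ(X)·(X·𝟙_A + (X ∧ q)·𝟙_{A^c})] over all σ(X)-measurable events A with ℙ(A) = 1−p; equivalently, A* maximizes 𝔼[(X−q)⁺·γ(X)·𝟙_A] over such A. -/

import Mathlib

open MeasureTheory Filter
open scoped ENNReal Topology Classical

noncomputable def VaR {Ω : Type*} [MeasurableSpace Ω] (P : Measure Ω) (p : ℝ) (Y : Ω → ℝ) : ℝ :=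
  sInf {x : ℝ | p ≤ (P {ω | Y ω ≤ x}).toReal}

noncomputable def ES {Ω : Type*} [MeasurableSpace Ω] (P : Measure Ω) (p : ℝ) (Y : Ω → ℝ) : ℝ :=
  (1 - p)⁻¹ * ∫ u in p..(1 : ℝ), VaR P u Y

/-- The probability space is atomless. -/
def Atomless {Ω : Type*} [MeasurableSpace Ω] (P : Measure Ω) : Prop :=
  ∀ s : Set Ω, MeasurableSet s → 0 < P s →
    ∃ t, t ⊆ s ∧ MeasurableSet t ∧ 0 < P t ∧ P t < P s

/-- The (topological) support of a measure on ℝ. -/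
def msupport (μ : Measure ℝ) : Set ℝ :=
  {x | ∀ ε > 0, 0 < μ (Set.Ioo (x - ε) (x + ε))}

/-- The distribution `μ` has a density (w.r.t. Lebesgue measure) which is positive
on the support of `μ`. -/
def HasPositiveDensityOnSupport (μ : Measure ℝ) : Prop :=
  ∃ f : ℝ → ℝ, Measurable f ∧
    μ = MeasureTheory.volume.withDensity (fun x => ENNReal.ofReal (f x)) ∧
    ∀ x ∈ msupport μ, 0 < f x

/-- The distribution `μ` has a density (w.r.t. Lebesgue measure) which is decreasing
(and positive) on the support of `μ`. -/
def HasDecreasingDensityOnSupport (μ : Measure ℝ) : Prop :=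
  ∃ f : ℝ → ℝ, Measurable f ∧
    μ = MeasureTheory.volume.withDensity (fun x => ENNReal.ofReal (f x)) ∧
    AntitoneOn f (msupport μ) ∧ ∀ x ∈ msupport μ, 0 < f x

/-- Membership in the admissible set 𝒢_cm (complete market): measurable `g` with
budget constraint `𝔼[γ(X)·g(X)] ≥ x₀`. -/
def memGcm {Ω : Type*} [MeasurableSpace Ω] (P : Measure Ω) (X : Ω → ℝ) (γ : ℝ → ℝ)
    (x₀ : ℝ) (g : ℝ → ℝ) : Prop :=
  Measurable g ∧ Integrable (fun ω => γ (X ω) * g (X ω)) P ∧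
    x₀ ≤ ∫ ω, γ (X ω) * g (X ω) ∂P

/-- Membership in the admissible set 𝒢_ns (no short-selling):
`𝔼[γ(X)·g(X)] ≥ x₀` and `0 ≤ g(X) ≤ X` a.s. -/
def memGns {Ω : Type*} [MeasurableSpace Ω] (P : Measure Ω) (X : Ω → ℝ) (γ : ℝ → ℝ)
    (x₀ : ℝ) (g : ℝ → ℝ) : Prop :=
  Measurable g ∧ Integrable (fun ω => γ (X ω) * g (X ω)) P ∧
    x₀ ≤ ∫ ω, γ (X ω) * g (X ω) ∂P ∧
    (∀ᵐ ω ∂P, 0 ≤ g (X ω) ∧ g (X ω) ≤ X ω)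

/-- Membership in the admissible set 𝒢_bd (bounded positions):
`𝔼[γ(X)·g(X)] ≥ x₀` and `0 ≤ g(X) ≤ m` a.s. -/
def memGbd {Ω : Type*} [MeasurableSpace Ω] (P : Measure Ω) (X : Ω → ℝ) (γ : ℝ → ℝ)
    (x₀ m : ℝ) (g : ℝ → ℝ) : Prop :=
  Measurable g ∧ Integrable (fun ω => γ (X ω) * g (X ω)) P ∧
    x₀ ≤ ∫ ω, γ (X ω) * g (X ω) ∂P ∧
    (∀ᵐ ω ∂P, 0 ≤ g (X ω) ∧ g (X ω) ≤ m)

section aux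
variable {Ω : Type*} [MeasurableSpace Ω] (P : Measure Ω) [IsProbabilityMeasure P]

lemma quantSet_nonempty (Z : Ω → ℝ) {v : ℝ} (hv : v < 1) :
    {x : ℝ | v ≤ (P {ω | Z ω ≤ x}).toReal}.Nonempty := by
  have hmono : Monotone (fun n : ℕ => {ω | Z ω ≤ (n : ℝ)}) := by
    intro a b hab ω hω
    simp only [Set.mem_setOf_eq] at hω ⊢
    exact le_trans hω (by exact_mod_cast hab)
  have ht := tendsto_measure_iUnion_atTop (μ := P) hmono
  have hUnion : (⋃ n : ℕ, {ω | Z ω ≤ (n : ℝ)}) = Set.univ := by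
    ext ω
    simp only [Set.mem_iUnion, Set.mem_univ, iff_true, Set.mem_setOf_eq]
    exact exists_nat_ge (Z ω)
  rw [hUnion, measure_univ] at ht
  have h1 : ENNReal.ofReal v < 1 := by
    rcases le_or_gt v 0 with h | h
    · simpa [ENNReal.ofReal_eq_zero.2 h] using one_pos (α := ℝ≥0∞)
    · exact ENNReal.ofReal_lt_one.2 hv
  obtain ⟨n, hn⟩ := (ht.eventually_const_lt h1).exists
  exact ⟨n, (ENNReal.ofReal_le_iff_le_toReal (measure_ne_top P _)).1 hn.le⟩

lemma quantSet_bddBelow (Z : Ω → ℝ) (hZ : Measurable Z) {u : ℝ} (hu : 0 < u) :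
    BddBelow {x : ℝ | u ≤ (P {ω | Z ω ≤ x}).toReal} := by
  have hanti : Antitone (fun n : ℕ => {ω | Z ω ≤ -(n : ℝ)}) := by
    intro a b hab ω hω
    simp only [Set.mem_setOf_eq] at hω ⊢
    refine le_trans hω (neg_le_neg ?_)
    exact_mod_cast hab
  have ht := tendsto_measure_iInter_atTop (μ := P) (s := fun n : ℕ => {ω | Z ω ≤ -(n : ℝ)})
    (fun n => ((hZ measurableSet_Iic).nullMeasurableSet : NullMeasurableSet {ω | Z ω ≤ -(n : ℝ)} P)) hanti ⟨0, measure_ne_top P _⟩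
  have hInter : (⋂ n : ℕ, {ω | Z ω ≤ -(n : ℝ)}) = ∅ := by
    ext ω
    simp only [Set.mem_iInter, Set.mem_setOf_eq, Set.mem_empty_iff_false, iff_false, not_forall,
      not_le]
    obtain ⟨n, hn⟩ := exists_nat_gt (-(Z ω))
    exact ⟨n, by linarith⟩
  rw [hInter, measure_empty] at ht
  have h1 : (0 : ℝ≥0∞) < ENNReal.ofReal u := ENNReal.ofReal_pos.2 hu
  obtain ⟨n, hn⟩ := (ht.eventually_lt_const h1).exists
  refine ⟨-(n : ℝ), fun x hx => ?_⟩
  by_contra hlt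
  push_neg at hlt
  have hsub : {ω | Z ω ≤ x} ⊆ {ω | Z ω ≤ -(n : ℝ)} := fun ω hω => le_trans hω hlt.le
  have : u ≤ (P {ω | Z ω ≤ -(n : ℝ)}).toReal :=
    le_trans hx (ENNReal.toReal_mono (measure_ne_top P _) (measure_mono hsub))
  have : ENNReal.ofReal u ≤ P {ω | Z ω ≤ -(n : ℝ)} :=
    (ENNReal.ofReal_le_iff_le_toReal (measure_ne_top P _)).2 this
  exact absurd (lt_of_le_of_lt this hn) (lt_irrefl _)

lemma VaR_mono_aux (Z : Ω → ℝ) (hZ : Measurable Z) {u v : ℝ} (hu : 0 < u) (hv : v < 1)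
    (huv : u ≤ v) : VaR P u Z ≤ VaR P v Z := by
  apply csInf_le_csInf (quantSet_bddBelow P Z hZ hu) (quantSet_nonempty P Z hv)
  intro x hx
  exact le_trans huv hx

end aux

theorem stmt12 {Ω : Type*} [MeasurableSpace Ω] (P : Measure Ω) [IsProbabilityMeasure P]
    (hPatomless : Atomless P)
    (X : Ω → ℝ) (hXmeas : Measurable X) (hXnonneg : ∀ᵐ ω ∂P, 0 ≤ X ω)
    (hXdens : HasPositiveDensityOnSupport (Measure.map X P))
    (γ : ℝ → ℝ) (hγcont : Continuous γ) (hγpos : ∀ x, 0 < γ x)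
    (hγint : Integrable (fun ω => γ (X ω)) P)
    (hγ1 : ∫ ω, γ (X ω) ∂P = 1)
    (hγXint : Integrable (fun ω => γ (X ω) * X ω) P)
    (p : ℝ) (hp : p ∈ Set.Ioo (0 : ℝ) 1)
    (q : ℝ) (hqpos : 0 < q)
    (U : Ω → ℝ)
    (hUmeas : Measurable[MeasurableSpace.comap X inferInstance] U)
    (hUunif : Measure.map U P = MeasureTheory.volume.restrict (Set.Icc (0 : ℝ) 1))
    (hUqt : ∀ᵐ ω ∂P, VaR P (U ω) (fun ω' => (X ω' - q) * γ (X ω')) = (X ω - q) * γ (X ω)) :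
    ∀ A : Set Ω, MeasurableSet[MeasurableSpace.comap X inferInstance] A →
      (P A).toReal = 1 - p →
      (∫ ω, γ (X ω) * (if ω ∈ A then X ω else min (X ω) q) ∂P ≤
        ∫ ω, γ (X ω) * (if p < U ω then X ω else min (X ω) q) ∂P) ∧
      (∫ ω, (if ω ∈ A then max (X ω - q) 0 * γ (X ω) else 0) ∂P ≤
        ∫ ω, (if p < U ω then max (X ω - q) 0 * γ (X ω) else 0) ∂P) := by

  intro A hAm hAp
  have hcomap_le : MeasurableSpace.comap X inferInstance ≤ ‹MeasurableSpace Ω› :=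
    hXmeas.comap_le
  have hA : MeasurableSet A := hcomap_le A hAm
  have hU : Measurable U := hUmeas.mono hcomap_le le_rfl
  set Z : Ω → ℝ := fun ω => (X ω - q) * γ (X ω) with hZdef
  have hZmeas : Measurable Z :=
    (hXmeas.sub measurable_const).mul (hγcont.measurable.comp hXmeas)
  set f : Ω → ℝ := fun ω => max (X ω - q) 0 * γ (X ω) with hfdef
  have hfmeas : Measurable f :=
    ((hXmeas.sub measurable_const).max measurable_const).mul (hγcont.measurable.comp hXmeas)
  have hfnonneg : ∀ ω, 0 ≤ f ω := fun ω => mul_nonneg (le_max_right _ _) (hγpos _).le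
  have hfint : Integrable f P := by
    refine hγXint.mono hfmeas.aestronglyMeasurable ?_
    filter_upwards [hXnonneg] with ω hX0
    rw [Real.norm_eq_abs, Real.norm_eq_abs, abs_of_nonneg (hfnonneg ω),
      abs_of_nonneg (mul_nonneg (hγpos _).le hX0)]
    calc f ω = γ (X ω) * max (X ω - q) 0 := mul_comm _ _
      _ ≤ γ (X ω) * X ω :=
        mul_le_mul_of_nonneg_left (max_le (by linarith) hX0) (hγpos _).le
  set B : Set Ω := {ω | p < U ω} with hBdef
  have hB : MeasurableSet B := measurableSet_lt measurable_const hU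
  have hPB : P B = ENNReal.ofReal (1 - p) := by
    have h1 : B = U ⁻¹' Set.Ioi p := rfl
    rw [h1, ← Measure.map_apply hU measurableSet_Ioi, hUunif,
      Measure.restrict_apply measurableSet_Ioi]
    have h2 : Set.Ioi p ∩ Set.Icc (0 : ℝ) 1 = Set.Ioc p 1 := by
      ext x
      simp only [Set.mem_inter_iff, Set.mem_Ioi, Set.mem_Icc, Set.mem_Ioc]
      constructor
      · rintro ⟨h, _, h'⟩; exact ⟨h, h'⟩
      · rintro ⟨h, h'⟩; exact ⟨h, le_of_lt (lt_trans hp.1 h), h'⟩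
    rw [h2, Real.volume_Ioc]
  have hPAB : P A = P B := by
    refine (ENNReal.toReal_eq_toReal_iff' (measure_ne_top P A) (measure_ne_top P B)).1 ?_
    rw [hAp, hPB, ENNReal.toReal_ofReal (by linarith [hp.2])]
  have hU01 : ∀ᵐ ω ∂P, U ω ∈ Set.Ioo (0 : ℝ) 1 := by
    have hmeas : MeasurableSet (Set.Ioo (0 : ℝ) 1)ᶜ := measurableSet_Ioo.compl
    have h0 : P (U ⁻¹' (Set.Ioo (0 : ℝ) 1)ᶜ) = 0 := by
      rw [← Measure.map_apply hU hmeas, hUunif, Measure.restrict_apply hmeas]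
      refine measure_mono_null ?_ (show volume ({0, 1} : Set ℝ) = 0 by
        rw [Set.insert_eq]
        exact measure_union_null Real.volume_singleton Real.volume_singleton)
      rintro x ⟨hx1, hx2⟩
      simp only [Set.mem_compl_iff, Set.mem_Ioo, not_and, not_lt] at hx1
      rcases eq_or_lt_of_le hx2.1 with h | h
      · exact Or.inl h.symm
      · exact Or.inr (le_antisymm hx2.2 (hx1 h))
    rw [ae_iff]
    exact h0
  set c : ℝ := VaR P p Z with hcdef
  have hae : ∀ᵐ ω ∂P, (ω ∈ B → c ≤ Z ω) ∧ (ω ∉ B → Z ω ≤ c) := by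
    filter_upwards [hUqt, hU01] with ω hq h01
    constructor
    · intro hω
      have hm := VaR_mono_aux P Z hZmeas hp.1 h01.2 (le_of_lt hω)
      rw [hq] at hm
      exact hm
    · intro hω
      have hω' : U ω ≤ p := not_lt.1 hω
      have hm := VaR_mono_aux P Z hZmeas h01.1 hp.2 hω'
      rw [hq] at hm
      exact hm
  set cp : ℝ := max c 0 with hcpdef
  have hfZ : ∀ ω, f ω = max (Z ω) 0 := by
    intro ω
    rw [hfdef, hZdef]
    simp only
    rw [max_mul_of_nonneg _ _ (hγpos (X ω)).le, zero_mul]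
  -- key inequality on set integrals
  have key : ∫ ω in A, f ω ∂P ≤ ∫ ω in B, f ω ∂P := by
    have hIA : IntegrableOn f A P := hfint.integrableOn
    have hIB : IntegrableOn f B P := hfint.integrableOn
    have hsplitA : (∫ ω in A ∩ B, f ω ∂P) + ∫ ω in A \ B, f ω ∂P = ∫ ω in A, f ω ∂P :=
      integral_inter_add_diff hB hIA
    have hsplitB : (∫ ω in B ∩ A, f ω ∂P) + ∫ ω in B \ A, f ω ∂P = ∫ ω in B, f ω ∂P :=
      integral_inter_add_diff hA hIB
    have hinter : ∫ ω in A ∩ B, f ω ∂P = ∫ ω in B ∩ A, f ω ∂P := by rw [Set.inter_comm]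
    have hdiff : (P (A \ B)).toReal = (P (B \ A)).toReal := by
      have h1 : P (A \ B) + P (A ∩ B) = P A := measure_diff_add_inter A hB
      have h2 : P (B \ A) + P (B ∩ A) = P B := measure_diff_add_inter B hA
      have h3 : P (A ∩ B) = P (B ∩ A) := by rw [Set.inter_comm]
      have h4 : P (A \ B) = P (B \ A) := by
        have := h1.trans (hPAB.trans h2.symm)
        rw [h3] at this
        exact (ENNReal.add_left_inj (measure_ne_top P _)).1 this
      rw [h4]
    have hub : ∫ ω in A \ B, f ω ∂P ≤ (P (A \ B)).toReal * cp := by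
      have hle : ∫ ω in A \ B, f ω ∂P ≤ ∫ _ω in A \ B, cp ∂P := by
        refine integral_mono_ae (hIA.mono_set Set.diff_subset) (integrable_const cp) ?_
        rw [Filter.EventuallyLE, ae_restrict_iff' (hA.diff hB)]
        filter_upwards [hae] with ω hω hmem
        rw [hfZ ω]
        exact max_le_max (hω.2 hmem.2) le_rfl
      rwa [setIntegral_const, smul_eq_mul] at hle
    have hlb : (P (B \ A)).toReal * cp ≤ ∫ ω in B \ A, f ω ∂P := by
      have hle : (∫ _ω in B \ A, cp ∂P) ≤ ∫ ω in B \ A, f ω ∂P := by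
        refine integral_mono_ae (integrable_const cp) (hIB.mono_set Set.diff_subset) ?_
        rw [Filter.EventuallyLE, ae_restrict_iff' (hB.diff hA)]
        filter_upwards [hae] with ω hω hmem
        rw [hfZ ω]
        exact max_le_max (hω.1 hmem.1) le_rfl
      rwa [setIntegral_const, smul_eq_mul] at hle
    rw [← hsplitA, ← hsplitB]
    rw [hdiff] at hub
    linarith [hub.trans hlb, hinter]
  -- rewrite indicator integrals as set integrals
  have hindicator : ∀ (s : Set Ω), MeasurableSet s →
      ∫ ω, (if ω ∈ s then f ω else 0) ∂P = ∫ ω in s, f ω ∂P := by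
    intro s hs
    rw [← integral_indicator hs]
    exact integral_congr_ae (Filter.Eventually.of_forall fun ω => by simp [Set.indicator_apply])
  have hmemB : ∀ ω, (p < U ω) = (ω ∈ B) := fun ω => rfl
  have key2 : (∫ ω, (if ω ∈ A then max (X ω - q) 0 * γ (X ω) else 0) ∂P) ≤
      ∫ ω, (if p < U ω then max (X ω - q) 0 * γ (X ω) else 0) ∂P := by
    have hfa : ∀ ω, max (X ω - q) 0 * γ (X ω) = f ω := fun ω => rfl
    simp only [hfa, hmemB]
    rw [hindicator A hA, hindicator B hB]
    exact key
  refine ⟨?_, key2⟩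
  -- first inequality: decompose the integrand
  have hsplit_fun : ∀ (b : Prop) (ω : Ω),
      γ (X ω) * (if b then X ω else min (X ω) q) =
        γ (X ω) * min (X ω) q + (if b then max (X ω - q) 0 * γ (X ω) else 0) := by
    intro b ω
    by_cases h : b
    · simp only [if_pos h]
      rcases le_total (X ω) q with h' | h'
      · rw [min_eq_left h', max_eq_right (by linarith)]; ring
      · rw [min_eq_right h', max_eq_left (by linarith)]; ring
    · simp only [if_neg h]; ring
  have hg0int : Integrable (fun ω => γ (X ω) * min (X ω) q) P := by
    refine (hγint.const_mul q).mono
      ((hγcont.measurable.comp hXmeas).mul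
        (hXmeas.min measurable_const)).aestronglyMeasurable ?_
    filter_upwards [hXnonneg] with ω hX0
    rw [Real.norm_eq_abs, Real.norm_eq_abs, abs_mul, abs_of_nonneg (hγpos _).le,
      abs_of_nonneg (mul_nonneg hqpos.le (hγpos _).le)]
    calc γ (X ω) * |min (X ω) q| ≤ γ (X ω) * q := by
          refine mul_le_mul_of_nonneg_left ?_ (hγpos _).le
          rw [abs_of_nonneg (le_min hX0 hqpos.le)]
          exact min_le_right _ _
      _ = q * γ (X ω) := mul_comm _ _
  have hindint : ∀ (s : Set Ω), MeasurableSet s →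
      Integrable (fun ω => if ω ∈ s then f ω else 0) P := by
    intro s hs
    exact (hfint.indicator hs).congr
      (Filter.Eventually.of_forall fun ω => by simp [Set.indicator_apply])
  calc ∫ ω, γ (X ω) * (if ω ∈ A then X ω else min (X ω) q) ∂P
      = ∫ ω, (γ (X ω) * min (X ω) q + if ω ∈ A then f ω else 0) ∂P := by
        congr 1; ext ω; exact hsplit_fun _ ω
    _ = (∫ ω, γ (X ω) * min (X ω) q ∂P) + ∫ ω, (if ω ∈ A then f ω else 0) ∂P :=
        integral_add hg0int (hindint A hA)
    _ ≤ (∫ ω, γ (X ω) * min (X ω) q ∂P) + ∫ ω, (if ω ∈ B then f ω else 0) ∂P := by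
        have := key2
        simp only [hmemB] at this
        exact add_le_add_right this _
    _ = ∫ ω, (γ (X ω) * min (X ω) q + if ω ∈ B then f ω else 0) ∂P :=
        (integral_add hg0int (hindint B hB)).symm
    _ = ∫ ω, γ (X ω) * (if p < U ω then X ω else min (X ω) q) ∂P := by
        congr 1; ext ω
        exact (hsplit_fun _ ω).symm
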